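/- The polynomial \(2u^5vw + 4u^3v^3w + u^2v^4w + u^6 + 2u^5v + 3u^4vw + 2u^3v^2w + 4u^2v^3w + 4u^2v^2w^2 + 2uv^5 + 2uv^4w + 3uv^3w^2 + 4v^6 + 2v^5w + 4v^4w^2 + u^4v + 3u^3v^2 + 4u^3vw + 4u^2v^3 + 2uv^4 + 3uv^3w + 3uv^2w^2 + v^5 + 2v^4w + 3v^3w^2 + 2u^2v^2 + 3uv^3 + uv^2w + 3v^4 + 3v^3w + 4v^2w^2 + 3v^3\) over \(\mathbb{F}_5\) is irreducible, and has degree 6 in \(u\), degree 6 in \(v\), and degree 2 in \(w\). -/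

import Mathlib

open MvPolynomial

/-- The reduction mod 5 of the equation of the function field of `𝓛₅` in
coordinates `(u, v, w) = (X 0, X 1, X 2)`. -/
noncomputable def L5mod5 : MvPolynomial (Fin 3) (ZMod 5) :=
  let u : MvPolynomial (Fin 3) (ZMod 5) := X 0
  let v : MvPolynomial (Fin 3) (ZMod 5) := X 1
  let w : MvPolynomial (Fin 3) (ZMod 5) := X 2
  2*u^5*v*w + 4*u^3*v^3*w + u^2*v^4*w + u^6 + 2*u^5*v + 3*u^4*v*w + 2*u^3*v^2*w
    + 4*u^2*v^3*w + 4*u^2*v^2*w^2 + 2*u*v^5 + 2*u*v^4*w + 3*u*v^3*w^2 + 4*v^6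
    + 2*v^5*w + 4*v^4*w^2 + u^4*v + 3*u^3*v^2 + 4*u^3*v*w + 4*u^2*v^3 + 2*u*v^4
    + 3*u*v^3*w + 3*u*v^2*w^2 + v^5 + 2*v^4*w + 3*v^3*w^2 + 2*u^2*v^2 + 3*u*v^3
    + u*v^2*w + 3*v^4 + 3*v^3*w + 4*v^2*w^2 + 3*v^3

namespace L5aux

open Polynomial

theorem pnum (n : ℕ) [n.AtLeastTwo] :
    (OfNat.ofNat n : Polynomial (ZMod 5)) = Polynomial.C ((n : ZMod 5)) := by
  rw [Polynomial.C_eq_natCast]; exact (Nat.cast_ofNat).symm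

theorem pnum_eq (a b : ℕ) [a.AtLeastTwo] [b.AtLeastTwo] (h : (a : ZMod 5) = (b : ZMod 5)) :
    (OfNat.ofNat a : Polynomial (ZMod 5)) = OfNat.ofNat b := by rw [pnum, pnum, h]

theorem pnum_one (a : ℕ) [a.AtLeastTwo] (h : (a : ZMod 5) = 1) :
    (OfNat.ofNat a : Polynomial (ZMod 5)) = 1 := by rw [pnum, h, map_one]

instance : Fact (Nat.Prime 5) := ⟨by norm_num⟩

abbrev R2 := MvPolynomial (Fin 2) (ZMod 5)

theorem R2_one_ne_zero : (1 : R2) ≠ 0 := one_ne_zero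

/-- `L5mod5` as a polynomial in `u` over `𝔽₅[v, w]` (with `v = X 0`, `w = X 1`). -/
noncomputable def Fu : Polynomial R2 :=
  let v : R2 := X 0
  let w : R2 := X 1
  Polynomial.X^6 + Polynomial.C (2*v*w + 2*v) * Polynomial.X^5
    + Polynomial.C (3*v*w + v) * Polynomial.X^4
    + Polynomial.C (4*v^3*w + 2*v^2*w + 3*v^2 + 4*v*w) * Polynomial.X^3
    + Polynomial.C (v^4*w + 4*v^3*w + 4*v^2*w^2 + 4*v^3 + 2*v^2) * Polynomial.X^2
    + Polynomial.C (2*v^5 + 2*v^4*w + 3*v^3*w^2 + 2*v^4 + 3*v^3*w + 3*v^2*w^2 + 3*v^3 + v^2*w) * Polynomial.X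
    + Polynomial.C (4*v^6 + 2*v^5*w + 4*v^4*w^2 + v^5 + 2*v^4*w + 3*v^3*w^2 + 3*v^4 + 3*v^3*w + 4*v^2*w^2 + 3*v^3)

theorem hFu : finSuccEquiv (ZMod 5) 2 L5mod5 = Fu := by
  have h1 : (X 1 : MvPolynomial (Fin 3) (ZMod 5)) = X (Fin.succ 0) := rfl
  have h2 : (X 2 : MvPolynomial (Fin 3) (ZMod 5)) = X (Fin.succ 1) := rfl
  rw [L5mod5, Fu]
  simp only [h1, h2, map_add, map_mul, map_pow, map_ofNat, finSuccEquiv_X_zero,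
    finSuccEquiv_X_succ]
  ring

theorem Fu_monic : Fu.Monic := by
  rw [Fu]; monicity!

theorem Fu_deg : Fu.natDegree = 6 := by
  rw [Fu]; compute_degree <;> first | omega | exact R2_one_ne_zero

/-- The specialization of `Fu` at `(v, w) = (1, 0)`. -/
noncomputable def f10 : Polynomial (ZMod 5) :=
  Polynomial.X^6 + Polynomial.C 2 * Polynomial.X^5 + Polynomial.X^4 + Polynomial.C 3 * Polynomial.X^3
    + Polynomial.X^2 + Polynomial.C 2 * Polynomial.X + Polynomial.C 1

/-- The specialization of `Fu` at `(v, w) = (1, 2)`. -/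
noncomputable def f12 : Polynomial (ZMod 5) :=
  Polynomial.X^6 + Polynomial.X^5 + Polynomial.C 2 * Polynomial.X^4 + Polynomial.C 3 * Polynomial.X^3
    + Polynomial.C 2 * Polynomial.X^2 + Polynomial.C 3 * Polynomial.X + Polynomial.C 4

theorem map10 : Fu.map (MvPolynomial.eval ![(1 : ZMod 5), 0]) = f10 := by
  rw [Fu, f10]
  simp only [Polynomial.map_add, Polynomial.map_mul, Polynomial.map_pow, Polynomial.map_X,
    Polynomial.map_C, map_add, map_mul, map_pow, MvPolynomial.eval_X, map_ofNat,
    Matrix.cons_val_zero, Matrix.cons_val_one, Matrix.head_cons]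
  norm_num
  rw [show (6:Polynomial (ZMod 5)) = 1 by rw [pnum, show ((6:ℕ):ZMod 5) = 1 by decide, map_one],
    show (7:Polynomial (ZMod 5)) = 2 by rw [pnum 7, pnum 2, show ((7:ℕ):ZMod 5) = ((2:ℕ):ZMod 5) by decide],
    show (11:Polynomial (ZMod 5)) = 1 by rw [pnum, show ((11:ℕ):ZMod 5) = 1 by decide, map_one]]
  ring

theorem map12 : Fu.map (MvPolynomial.eval ![(1 : ZMod 5), 2]) = f12 := by
  rw [Fu, f12]
  simp only [Polynomial.map_add, Polynomial.map_mul, Polynomial.map_pow, Polynomial.map_X,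
    Polynomial.map_C, map_add, map_mul, map_pow, MvPolynomial.eval_X, map_ofNat,
    Matrix.cons_val_zero, Matrix.cons_val_one, Matrix.head_cons]
  norm_num
  ring_nf
  rw [pnum_one 6 (by decide), pnum_eq 7 2 (by decide), pnum_eq 23 3 (by decide),
    pnum_eq 32 2 (by decide), pnum_eq 43 3 (by decide), pnum_eq 69 4 (by decide)]
  ring

theorem key24 : ∀ a b c d e k : ZMod 5, b * k = 4 → k * a + e * b = 3 →
    e * a + d * b + k = 2 → d * a + c * b + e = 3 → c * a + b + d = 2 → a + c = 1 → False := by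
  decide

theorem key33 : ∀ a b c d e k : ZMod 5, c * k = 1 → k * b + e * c = 2 →
    k * a + e * b + d * c = 1 → e * a + d * b + c + k = 3 → d * a + b + e = 1 → a + d = 2 → False := by
  decide

theorem noroot10 : ∀ t : ZMod 5, f10.eval t ≠ 0 := by
  have key : ∀ t : ZMod 5, t^6 + 2*t^5 + t^4 + 3*t^3 + t^2 + 2*t + 1 ≠ 0 := by decide
  intro t
  have := key t
  rw [f10]
  simpa using this

/-- `f10` has no monic factor of degree 1. -/
theorem no15 (G H : Polynomial (ZMod 5)) (hG : G.Monic) (dG : G.natDegree = 1)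
    (h : G * H = f10) : False := by
  have hGr : G = Polynomial.X + Polynomial.C (G.coeff 0) := by
    conv_lhs => rw [G.as_sum_range' 2 (by omega)]
    simp only [Finset.sum_range_succ, Finset.sum_range_zero, ← Polynomial.C_mul_X_pow_eq_monomial]
    rw [show G.coeff 1 = 1 from dG ▸ hG.coeff_natDegree]
    simp
    ring
  apply noroot10 (-(G.coeff 0))
  rw [← h, Polynomial.eval_mul, hGr]
  simp

/-- `f12` has no monic factor of degree 2. -/
theorem no24 (G H : Polynomial (ZMod 5)) (hG : G.Monic) (hH : H.Monic)
    (dG : G.natDegree = 2) (dH : H.natDegree = 4) (h : G * H = f12) : False := by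
  have hGr : G = Polynomial.X^2 + Polynomial.C (G.coeff 1) * Polynomial.X + Polynomial.C (G.coeff 0) := by
    conv_lhs => rw [G.as_sum_range' 3 (by omega)]
    simp only [Finset.sum_range_succ, Finset.sum_range_zero, ← Polynomial.C_mul_X_pow_eq_monomial]
    rw [show G.coeff 2 = 1 from dG ▸ hG.coeff_natDegree]
    simp; ring
  have hHr : H = Polynomial.X^4 + Polynomial.C (H.coeff 3) * Polynomial.X^3
      + Polynomial.C (H.coeff 2) * Polynomial.X^2 + Polynomial.C (H.coeff 1) * Polynomial.X
      + Polynomial.C (H.coeff 0) := by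
    conv_lhs => rw [H.as_sum_range' 5 (by omega)]
    simp only [Finset.sum_range_succ, Finset.sum_range_zero, ← Polynomial.C_mul_X_pow_eq_monomial]
    rw [show H.coeff 4 = 1 from dH ▸ hH.coeff_natDegree]
    simp; ring
  rw [hGr, hHr, f12] at h
  set a := G.coeff 1; set b := G.coeff 0
  set c := H.coeff 3; set d := H.coeff 2; set e := H.coeff 1; set k := H.coeff 0
  ring_nf at h
  have e0 := congrArg (fun p => Polynomial.coeff p 0) h
  have e1 := congrArg (fun p => Polynomial.coeff p 1) h
  have e2 := congrArg (fun p => Polynomial.coeff p 2) h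
  have e3 := congrArg (fun p => Polynomial.coeff p 3) h
  have e4 := congrArg (fun p => Polynomial.coeff p 4) h
  have e5 := congrArg (fun p => Polynomial.coeff p 5) h
  simp only [Polynomial.coeff_add, mul_assoc, ← Polynomial.C_mul, Polynomial.coeff_C_mul,
    Polynomial.coeff_X_pow, Polynomial.coeff_C, Polynomial.coeff_X, Polynomial.coeff_one, mul_comm] at e0 e1 e2 e3 e4 e5
  norm_num at e0 e1 e2 e3 e4 e5
  exact key24 a b c d e k e0 e1 e2 e3 e4 e5

/-- `f10` has no monic factorization into two cubics. -/
theorem no33 (G H : Polynomial (ZMod 5)) (hG : G.Monic) (hH : H.Monic)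
    (dG : G.natDegree = 3) (dH : H.natDegree = 3) (h : G * H = f10) : False := by
  have hGr : G = Polynomial.X^3 + Polynomial.C (G.coeff 2) * Polynomial.X^2
      + Polynomial.C (G.coeff 1) * Polynomial.X + Polynomial.C (G.coeff 0) := by
    conv_lhs => rw [G.as_sum_range' 4 (by omega)]
    simp only [Finset.sum_range_succ, Finset.sum_range_zero, ← Polynomial.C_mul_X_pow_eq_monomial]
    rw [show G.coeff 3 = 1 from dG ▸ hG.coeff_natDegree]
    simp; ring
  have hHr : H = Polynomial.X^3 + Polynomial.C (H.coeff 2) * Polynomial.X^2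
      + Polynomial.C (H.coeff 1) * Polynomial.X + Polynomial.C (H.coeff 0) := by
    conv_lhs => rw [H.as_sum_range' 4 (by omega)]
    simp only [Finset.sum_range_succ, Finset.sum_range_zero, ← Polynomial.C_mul_X_pow_eq_monomial]
    rw [show H.coeff 3 = 1 from dH ▸ hH.coeff_natDegree]
    simp; ring
  rw [hGr, hHr, f10] at h
  set a := G.coeff 2; set b := G.coeff 1; set c := G.coeff 0
  set d := H.coeff 2; set e := H.coeff 1; set k := H.coeff 0
  ring_nf at h
  have e0 := congrArg (fun p => Polynomial.coeff p 0) h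
  have e1 := congrArg (fun p => Polynomial.coeff p 1) h
  have e2 := congrArg (fun p => Polynomial.coeff p 2) h
  have e3 := congrArg (fun p => Polynomial.coeff p 3) h
  have e4 := congrArg (fun p => Polynomial.coeff p 4) h
  have e5 := congrArg (fun p => Polynomial.coeff p 5) h
  simp only [Polynomial.coeff_add, mul_assoc, ← Polynomial.C_mul, Polynomial.coeff_C_mul,
    Polynomial.coeff_X_pow, Polynomial.coeff_C, Polynomial.coeff_X, Polynomial.coeff_one, mul_comm] at e0 e1 e2 e3 e4 e5
  norm_num at e0 e1 e2 e3 e4 e5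
  exact key33 a b c d e k e0 e1 e2 e3 e4 e5

/-- Normalize a factorization of a monic polynomial over a field to a monic factorization. -/
theorem normalize_factors {f G H : Polynomial (ZMod 5)} (hf : G * H = f) (hm : f.Monic)
    (hG : G ≠ 0) (hH : H ≠ 0) :
    ∃ G' H' : Polynomial (ZMod 5), G'.Monic ∧ H'.Monic ∧ G' * H' = f ∧
      G'.natDegree = G.natDegree ∧ H'.natDegree = H.natDegree := by
  have hl : G.leadingCoeff * H.leadingCoeff = 1 := by
    rw [← leadingCoeff_mul, hf]; exact hm
  have hGl : G.leadingCoeff ≠ 0 := leadingCoeff_ne_zero.mpr hG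
  have hHl : H.leadingCoeff ≠ 0 := leadingCoeff_ne_zero.mpr hH
  refine ⟨Polynomial.C H.leadingCoeff * G, Polynomial.C G.leadingCoeff * H, ?_, ?_, ?_, ?_, ?_⟩
  · rw [Monic, leadingCoeff_mul, leadingCoeff_C, mul_comm]; exact hl
  · rw [Monic, leadingCoeff_mul, leadingCoeff_C]; exact hl
  · rw [mul_mul_mul_comm, ← Polynomial.C_mul, mul_comm H.leadingCoeff, hl, map_one, one_mul, hf]
  · exact natDegree_C_mul hHl
  · exact natDegree_C_mul hGl

theorem Fu_irred : Irreducible Fu := by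
  rw [irreducible_iff]
  constructor
  · intro hu
    have := natDegree_eq_zero_of_isUnit hu
    rw [Fu_deg] at this
    exact absurd this (by norm_num)
  · intro g h hgh
    by_contra hc
    push_neg at hc
    obtain ⟨hgu, hhu⟩ := hc
    have hFne : Fu ≠ 0 := Fu_monic.ne_zero
    have hg0 : g ≠ 0 := by rintro rfl; rw [zero_mul] at hgh; exact hFne hgh
    have hh0 : h ≠ 0 := by rintro rfl; rw [mul_zero] at hgh; exact hFne hgh
    have hlead : g.leadingCoeff * h.leadingCoeff = 1 := by
      have := Fu_monic
      rw [Monic, hgh, leadingCoeff_mul] at this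
      exact this
    have hug : IsUnit g.leadingCoeff := IsUnit.of_mul_eq_one _ hlead
    have huh : IsUnit h.leadingCoeff := IsUnit.of_mul_eq_one _ (by rwa [mul_comm] at hlead)
    have hdeg : g.natDegree + h.natDegree = 6 := by
      rw [← Polynomial.natDegree_mul hg0 hh0, ← hgh, Fu_deg]
    have hdg1 : 1 ≤ g.natDegree := by
      by_contra hlt
      apply hgu
      have h0 : g.natDegree = 0 := by omega
      rw [eq_C_of_natDegree_eq_zero h0]
      refine isUnit_C.mpr ?_
      have : g.leadingCoeff = g.coeff 0 := by rw [leadingCoeff, h0]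
      rwa [this] at hug
    have hdh1 : 1 ≤ h.natDegree := by
      by_contra hlt
      apply hhu
      have h0 : h.natDegree = 0 := by omega
      rw [eq_C_of_natDegree_eq_zero h0]
      refine isUnit_C.mpr ?_
      have : h.leadingCoeff = h.coeff 0 := by rw [leadingCoeff, h0]
      rwa [this] at huh
    -- specialize
    have spec : ∀ (v w : ZMod 5),
        (g.map (MvPolynomial.eval ![v, w])) * (h.map (MvPolynomial.eval ![v, w]))
          = Fu.map (MvPolynomial.eval ![v, w]) ∧
        (g.map (MvPolynomial.eval ![v, w])).natDegree = g.natDegree ∧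
        (h.map (MvPolynomial.eval ![v, w])).natDegree = h.natDegree ∧
        (g.map (MvPolynomial.eval ![v, w])) ≠ 0 ∧
        (h.map (MvPolynomial.eval ![v, w])) ≠ 0 := by
      intro v w
      have hgl : MvPolynomial.eval ![v, w] g.leadingCoeff ≠ 0 :=
        (hug.map (MvPolynomial.eval ![v, w])).ne_zero
      have hhl : MvPolynomial.eval ![v, w] h.leadingCoeff ≠ 0 :=
        (huh.map (MvPolynomial.eval ![v, w])).ne_zero
      refine ⟨by rw [← Polynomial.map_mul, hgh], ?_, ?_, ?_, ?_⟩
      · exact natDegree_map_of_leadingCoeff_ne_zero _ hgl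
      · exact natDegree_map_of_leadingCoeff_ne_zero _ hhl
      · intro hz
        apply hgl
        rw [leadingCoeff, ← Polynomial.coeff_map, hz, Polynomial.coeff_zero]
      · intro hz
        apply hhl
        rw [leadingCoeff, ← Polynomial.coeff_map, hz, Polynomial.coeff_zero]
    have hdg5 : g.natDegree ≤ 5 := by omega
    -- case analysis on the degree of g
    interval_cases hdg : g.natDegree
    · -- degree 1 : specialize at (1,0)
      obtain ⟨hm, hdG, hdH, hG0, hH0⟩ := spec 1 0
      rw [map10] at hm
      obtain ⟨G', H', hG'm, hH'm, hfac, hdG', hdH'⟩ :=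
        normalize_factors hm (by rw [f10]; monicity!) hG0 hH0
      exact no15 G' H' hG'm (by omega) hfac
    · obtain ⟨hm, hdG, hdH, hG0, hH0⟩ := spec 1 2
      rw [map12] at hm
      obtain ⟨G', H', hG'm, hH'm, hfac, hdG', hdH'⟩ :=
        normalize_factors hm (by rw [f12]; monicity!) hG0 hH0
      exact no24 G' H' hG'm hH'm (by omega) (by omega) hfac
    · obtain ⟨hm, hdG, hdH, hG0, hH0⟩ := spec 1 0
      rw [map10] at hm
      obtain ⟨G', H', hG'm, hH'm, hfac, hdG', hdH'⟩ :=
        normalize_factors hm (by rw [f10]; monicity!) hG0 hH0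
      exact no33 G' H' hG'm hH'm (by omega) (by omega) hfac
    · obtain ⟨hm, hdG, hdH, hG0, hH0⟩ := spec 1 2
      rw [map12] at hm
      obtain ⟨G', H', hG'm, hH'm, hfac, hdG', hdH'⟩ :=
        normalize_factors hm (by rw [f12]; monicity!) hG0 hH0
      exact no24 H' G' hH'm hG'm (by omega) (by omega) (by rwa [mul_comm])
    · obtain ⟨hm, hdG, hdH, hG0, hH0⟩ := spec 1 0
      rw [map10] at hm
      obtain ⟨G', H', hG'm, hH'm, hfac, hdG', hdH'⟩ :=
        normalize_factors hm (by rw [f10]; monicity!) hG0 hH0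
      exact no15 H' G' hH'm (by omega) (by rwa [mul_comm])

/-- `L5mod5` with `u` and `v` swapped, as a polynomial in `v` over `𝔽₅[u, w]`
(with `u = X 0`, `w = X 1`). -/
noncomputable def Fv : Polynomial R2 :=
  let u : R2 := X 0
  let w : R2 := X 1
  Polynomial.C 4 * Polynomial.X^6
    + Polynomial.C (2*u + 2*w + 1) * Polynomial.X^5
    + Polynomial.C (u^2*w + 2*u*w + 4*w^2 + 2*u + 2*w + 3) * Polynomial.X^4
    + Polynomial.C (4*u^3*w + 4*u^2*w + 3*u*w^2 + 4*u^2 + 3*u*w + 3*w^2 + 3*u + 3*w + 3) * Polynomial.X^3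
    + Polynomial.C (2*u^3*w + 4*u^2*w^2 + 3*u^3 + 3*u*w^2 + 2*u^2 + u*w + 4*w^2) * Polynomial.X^2
    + Polynomial.C (2*u^5*w + 2*u^5 + 3*u^4*w + u^4 + 4*u^3*w) * Polynomial.X
    + Polynomial.C (u^6)

set_option maxHeartbeats 2000000 in
theorem hFv : finSuccEquiv (ZMod 5) 2 (rename (Equiv.swap 0 1) L5mod5) = Fv := by
  have h1 : (X 1 : MvPolynomial (Fin 3) (ZMod 5)) = X (Fin.succ 0) := rfl
  have h2 : (X 2 : MvPolynomial (Fin 3) (ZMod 5)) = X (Fin.succ 1) := rfl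
  rw [L5mod5, Fv]
  simp only [map_add, map_mul, map_pow, map_ofNat, rename_X,
    show (Equiv.swap (0:Fin 3) 1) 0 = 1 from by decide,
    show (Equiv.swap (0:Fin 3) 1) 1 = 0 from by decide,
    show (Equiv.swap (0:Fin 3) 1) 2 = 2 from by decide]
  simp only [h1, h2, finSuccEquiv_X_zero, finSuccEquiv_X_succ, map_one]
  ring

/-- `L5mod5` with `u` and `w` swapped, as a polynomial in `w` over `𝔽₅[v, u]`
(with `v = X 0`, `u = X 1`). -/
noncomputable def Fw : Polynomial R2 :=
  let v : R2 := X 0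
  let u : R2 := X 1
  Polynomial.C (4*v^2*u^2 + 3*v^3*u + 4*v^4 + 3*v^2*u + 3*v^3 + 4*v^2) * Polynomial.X^2
    + Polynomial.C (2*v*u^5 + 4*v^3*u^3 + v^4*u^2 + 3*v*u^4 + 2*v^2*u^3 + 4*v^3*u^2 + 2*v^4*u
        + 2*v^5 + 4*v*u^3 + 3*v^3*u + 2*v^4 + v^2*u + 3*v^3) * Polynomial.X
    + Polynomial.C (u^6 + 2*v*u^5 + 2*v^5*u + 4*v^6 + v*u^4 + 3*v^2*u^3 + 4*v^3*u^2 + 2*v^4*u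
        + v^5 + 2*v^2*u^2 + 3*v^3*u + 3*v^4 + 3*v^3)

set_option maxHeartbeats 2000000 in
theorem hFw : finSuccEquiv (ZMod 5) 2 (rename (Equiv.swap 0 2) L5mod5) = Fw := by
  have h1 : (X 1 : MvPolynomial (Fin 3) (ZMod 5)) = X (Fin.succ 0) := rfl
  have h2 : (X 2 : MvPolynomial (Fin 3) (ZMod 5)) = X (Fin.succ 1) := rfl
  rw [L5mod5, Fw]
  simp only [map_add, map_mul, map_pow, map_ofNat, rename_X,
    show (Equiv.swap (0:Fin 3) 2) 0 = 2 from by decide,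
    show (Equiv.swap (0:Fin 3) 2) 1 = 1 from by decide,
    show (Equiv.swap (0:Fin 3) 2) 2 = 0 from by decide]
  simp only [h1, h2, finSuccEquiv_X_zero, finSuccEquiv_X_succ, map_one]
  ring

theorem R2_four_ne_zero : (4 : R2) ≠ 0 := by
  intro hc
  have := congrArg MvPolynomial.constantCoeff hc
  rw [map_ofNat, map_zero] at this
  exact absurd this (by decide)

theorem Fv_deg : Fv.natDegree = 6 := by
  rw [Fv]; compute_degree <;> first | omega | exact R2_four_ne_zero

theorem Fw_coeff_ne : (4*(X 0:R2)^2*(X 1:R2)^2 + 3*(X 0:R2)^3*(X 1:R2) + 4*(X 0:R2)^4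
    + 3*(X 0:R2)^2*(X 1:R2) + 3*(X 0:R2)^3 + 4*(X 0:R2)^2) ≠ 0 := by
  intro hc
  have := congrArg (MvPolynomial.eval ![(1:ZMod 5), 0]) hc
  simp at this
  exact absurd this (by decide)

theorem Fw_deg : Fw.natDegree = 2 := by
  rw [Fw]; compute_degree <;> first | omega | exact Fw_coeff_ne

end L5aux

/-- the above polynomial over `𝔽₅` is irreducible, of degree 6 in `u`,
degree 6 in `v`, and degree 2 in `w`. -/
theorem L5_mod5_irreducible :
    Irreducible L5mod5 ∧ degreeOf 0 L5mod5 = 6 ∧ degreeOf 1 L5mod5 = 6 ∧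
      degreeOf 2 L5mod5 = 2 := by
  refine ⟨?_, ?_, ?_, ?_⟩
  · have := L5aux.Fu_irred
    rw [← L5aux.hFu] at this
    exact (MulEquiv.irreducible_iff (finSuccEquiv (ZMod 5) 2)).mp this
  · rw [← natDegree_finSuccEquiv, L5aux.hFu, L5aux.Fu_deg]
  · have h := degreeOf_rename_of_injective (p := L5mod5) (Equiv.swap (0:Fin 3) 1).injective 1
    rw [show (Equiv.swap (0:Fin 3) 1) 1 = 0 from by decide] at h
    rw [← h, ← natDegree_finSuccEquiv, L5aux.hFv, L5aux.Fv_deg]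
  · have h := degreeOf_rename_of_injective (p := L5mod5) (Equiv.swap (0:Fin 3) 2).injective 2
    rw [show (Equiv.swap (0:Fin 3) 2) 2 = 0 from by decide] at h
    rw [← h, ← natDegree_finSuccEquiv, L5aux.hFw, L5aux.Fw_deg]
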